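/- Let D = {x ∈ ℝ² : x₂ > 0} and let u : ℝ² → ℝ² be C³ up to the boundary, divergence-free, with u(x₁,0) = 0 for all x₁. Let ω = ∂u²/∂x₁ − ∂u¹/∂x₂ and θ(x₁) = ω(x₁,0). Then at every boundary point, (Δω)(x₁,0) = 2 θ''(x₁) − ∂³u¹/∂x₂³ (x₁,0); equivalently (Δω)|_{∂D} = 2 Δ_Γ θ + (∂/∂𝛎)³ u¹ where ∂/∂𝛎 = −∂/∂x₂. -/

import Mathlib

/-- Partial derivative of a scalar field on `ℝⁿ` in the `i`-th coordinate direction. -/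
noncomputable def pd {n : ℕ} (i : Fin n) (f : (Fin n → ℝ) → ℝ) (x : Fin n → ℝ) : ℝ :=
  fderiv ℝ f x (Pi.single i 1)

/-- The scalar vorticity `ω = ∂u²/∂x₁ − ∂u¹/∂x₂` of a planar vector field. -/
noncomputable def vort2 (u : (Fin 2 → ℝ) → Fin 2 → ℝ) (x : Fin 2 → ℝ) : ℝ :=
  pd 0 (fun y => u y 1) x - pd 1 (fun y => u y 0) x

noncomputable def lineL : ℝ →L[ℝ] (Fin 2 → ℝ) :=
  ContinuousLinearMap.pi (Pi.single 0 (ContinuousLinearMap.id ℝ ℝ))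

lemma lineL_apply (a : ℝ) : lineL a = ![a, 0] := by
  funext i
  fin_cases i <;> simp [lineL, Pi.single, Function.update]

lemma single01 : (Pi.single 0 1 : Fin 2 → ℝ) = ![1, 0] := by
  funext i; fin_cases i <;> simp [Pi.single, Function.update]

lemma deriv_comp_line (f : (Fin 2 → ℝ) → ℝ) (a : ℝ)
    (hf : DifferentiableAt ℝ f ![a, 0]) :
    deriv (fun c => f ![c, 0]) a = pd 0 f ![a, 0] := by
  have hL : HasDerivAt lineL (lineL 1) a := lineL.hasDerivAt
  have h2 : HasDerivAt (fun c => f (lineL c)) (fderiv ℝ f ![a,0] (lineL 1)) a := by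
    have := hf.hasFDerivAt.comp_hasDerivAt_of_eq a hL (lineL_apply a).symm
    exact this
  have h3 : (fun c => f (lineL c)) = fun c => f ![c, 0] := by
    funext c; rw [lineL_apply]
  rw [h3] at h2
  rw [h2.deriv, pd]
  congr 1
  rw [lineL_apply, single01]

lemma pd_contDiff {m n : ℕ} (i : Fin 2) {f : (Fin 2 → ℝ) → ℝ}
    (hf : ContDiff ℝ n f) (h : m + 1 ≤ n) : ContDiff ℝ m (pd i f) := by
  have h' : (m : WithTop ℕ∞) + 1 ≤ (n : WithTop ℕ∞) := by exact_mod_cast h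
  exact (hf.fderiv_right h').clm_apply contDiff_const

lemma pd_sub {φ ψ : (Fin 2 → ℝ) → ℝ} (i : Fin 2) (x : Fin 2 → ℝ)
    (hφ : DifferentiableAt ℝ φ x) (hψ : DifferentiableAt ℝ ψ x) :
    pd i (fun y => φ y - ψ y) x = pd i φ x - pd i ψ x := by
  unfold pd; rw [fderiv_fun_sub hφ hψ]; rfl

lemma pd_neg {φ : (Fin 2 → ℝ) → ℝ} (i : Fin 2) (x : Fin 2 → ℝ) :
    pd i (fun y => -(φ y)) x = -(pd i φ x) := by
  unfold pd; rw [fderiv_fun_neg]; rfl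

lemma pd_pd {f : (Fin 2 → ℝ) → ℝ} (i j : Fin 2) (x : Fin 2 → ℝ)
    (hf : DifferentiableAt ℝ (fderiv ℝ f) x) :
    pd i (pd j f) x = fderiv ℝ (fderiv ℝ f) x (Pi.single i 1) (Pi.single j 1) := by
  unfold pd
  rw [fderiv_clm_apply hf (differentiableAt_const _)]
  simp

lemma pd_swap {f : (Fin 2 → ℝ) → ℝ} (hf : ContDiff ℝ 2 f) (i j : Fin 2) (x : Fin 2 → ℝ) :
    pd i (pd j f) x = pd j (pd i f) x := by
  have hd : DifferentiableAt ℝ (fderiv ℝ f) x := by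
    have : ContDiff ℝ 1 (fderiv ℝ f) := hf.fderiv_right (by norm_num)
    exact (this.differentiable (by norm_num)) x
  rw [pd_pd i j x hd, pd_pd j i x hd]
  exact (hf.contDiffAt.isSymmSndFDerivAt (by norm_num)) _ _

lemma pd0_boundary_zero {φ : (Fin 2 → ℝ) → ℝ} (hφ : ∀ b : ℝ, φ ![b, 0] = 0)
    (hd : ∀ b : ℝ, DifferentiableAt ℝ φ ![b, 0]) :
    ∀ a : ℝ, pd 0 φ ![a, 0] = 0 := by
  intro a
  rw [← deriv_comp_line φ a (hd a)]
  have : (fun c => φ ![c, 0]) = fun _ => (0 : ℝ) := funext hφ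
  rw [this, deriv_const]

/-- for a `C³`, divergence-free planar vector field `u` on the upper half
plane vanishing on the boundary `{x₂ = 0}`, at every boundary point
`(Δω)(x₁,0) = 2 θ''(x₁) − ∂³u¹/∂x₂³(x₁,0)`, where `θ(x₁) = ω(x₁,0)`; equivalently
`(Δω)|_{∂D} = 2 Δ_Γ θ + (∂/∂𝛎)³u¹` with `∂/∂𝛎 = −∂/∂x₂`. -/
theorem boundary_laplacian_vorticity_2d
    (u : (Fin 2 → ℝ) → Fin 2 → ℝ)
    (hu : ContDiff ℝ 3 u)
    (hdiv : ∀ x : Fin 2 → ℝ,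
      pd 0 (fun y => u y 0) x + pd 1 (fun y => u y 1) x = 0)
    (hnoslip : ∀ a : ℝ, u ![a, 0] = 0) :
    ∀ a : ℝ,
      pd 0 (pd 0 (vort2 u)) ![a, 0] + pd 1 (pd 1 (vort2 u)) ![a, 0]
        = 2 * deriv (fun b => deriv (fun c => vort2 u ![c, 0]) b) a
          - pd 1 (pd 1 (pd 1 (fun y => u y 0))) ![a, 0] := by
  intro a
  set f : (Fin 2 → ℝ) → ℝ := fun y => u y 0 with hfdef
  set g : (Fin 2 → ℝ) → ℝ := fun y => u y 1 with hgdef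
  have hf3 : ContDiff ℝ 3 f := contDiff_pi.1 hu 0
  have hg3 : ContDiff ℝ 3 g := contDiff_pi.1 hu 1
  have hf2 : ContDiff ℝ 2 f := hf3.of_le (by norm_num)
  have hg2 : ContDiff ℝ 2 g := hg3.of_le (by norm_num)
  -- first partials are C²
  have hpd0f2 : ContDiff ℝ 2 (pd 0 f) := pd_contDiff 0 (by exact_mod_cast hf3) (by norm_num)
  have hpd1f2 : ContDiff ℝ 2 (pd 1 f) := pd_contDiff 1 (by exact_mod_cast hf3) (by norm_num)
  have hpd0g2 : ContDiff ℝ 2 (pd 0 g) := pd_contDiff 0 (by exact_mod_cast hg3) (by norm_num)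
  have hpd1g2 : ContDiff ℝ 2 (pd 1 g) := pd_contDiff 1 (by exact_mod_cast hg3) (by norm_num)
  -- second partial ∂₀∂₀g is C¹
  have hpd00g1 : ContDiff ℝ 1 (pd 0 (pd 0 g)) := by
    have h2 : ContDiff ℝ 2 (pd 0 g) := pd_contDiff 0 (by exact_mod_cast hg3) (by norm_num)
    exact pd_contDiff 0 (n := 2) (by exact_mod_cast h2) (by norm_num)
  -- vorticity is C²
  have hω2 : ContDiff ℝ 2 (vort2 u) := by
    have : ContDiff ℝ 2 (fun x => pd 0 g x - pd 1 f x) := hpd0g2.sub hpd1f2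
    exact this
  have hpd0ω1 : ContDiff ℝ 1 (pd 0 (vort2 u)) :=
    pd_contDiff 0 (n := 2) (by exact_mod_cast hω2) (by norm_num)
  -- divergence-free as a function identity
  have hdivfun : pd 1 g = fun y => -(pd 0 f y) := by
    funext x; have := hdiv x; linarith
  -- swap identities (function level)
  have sw_f : pd 1 (pd 0 f) = pd 0 (pd 1 f) := funext fun x => pd_swap hf2 1 0 x
  have sw_g : pd 1 (pd 0 g) = pd 0 (pd 1 g) := funext fun x => pd_swap hg2 1 0 x
  -- key identity (2): ∂₁∂₁∂₀ g = − ∂₀∂₀∂₁ f everywhere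
  have key : ∀ x, pd 1 (pd 1 (pd 0 g)) x = -(pd 0 (pd 0 (pd 1 f)) x) := by
    intro x
    have e1 : pd 1 (pd 0 g) = fun y => -(pd 0 (pd 0 f) y) := by
      rw [sw_g, hdivfun]; funext y; exact pd_neg 0 y
    calc pd 1 (pd 1 (pd 0 g)) x
        = pd 1 (fun y => -(pd 0 (pd 0 f) y)) x := by rw [e1]
      _ = -(pd 1 (pd 0 (pd 0 f)) x) := pd_neg 1 x
      _ = -(pd 0 (pd 1 (pd 0 f)) x) := by rw [pd_swap hpd0f2 1 0 x]
      _ = -(pd 0 (pd 0 (pd 1 f)) x) := by rw [sw_f]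
  -- expansion of the vorticity partials
  have e0 : pd 0 (vort2 u) = fun x => pd 0 (pd 0 g) x - pd 0 (pd 1 f) x := by
    funext x
    exact pd_sub 0 x ((hpd0g2.differentiable (by norm_num)) x)
      ((hpd1f2.differentiable (by norm_num)) x)
  have e1 : pd 1 (vort2 u) = fun x => pd 1 (pd 0 g) x - pd 1 (pd 1 f) x := by
    funext x
    exact pd_sub 1 x ((hpd0g2.differentiable (by norm_num)) x)
      ((hpd1f2.differentiable (by norm_num)) x)
  have h00 : ∀ x, pd 0 (pd 0 (vort2 u)) x
      = pd 0 (pd 0 (pd 0 g)) x - pd 0 (pd 0 (pd 1 f)) x := by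
    intro x
    rw [e0]
    exact pd_sub 0 x
      (((pd_contDiff 0 (m := 1) (n := 2) (by exact_mod_cast hpd0g2) (by norm_num)).differentiable
        (by norm_num)) x)
      (((pd_contDiff 0 (m := 1) (n := 2) (by exact_mod_cast hpd1f2) (by norm_num)).differentiable
        (by norm_num)) x)
  have h11 : ∀ x, pd 1 (pd 1 (vort2 u)) x
      = pd 1 (pd 1 (pd 0 g)) x - pd 1 (pd 1 (pd 1 f)) x := by
    intro x
    rw [e1]
    exact pd_sub 1 x
      (((pd_contDiff 1 (m := 1) (n := 2) (by exact_mod_cast hpd0g2) (by norm_num)).differentiable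
        (by norm_num)) x)
      (((pd_contDiff 1 (m := 1) (n := 2) (by exact_mod_cast hpd1f2) (by norm_num)).differentiable
        (by norm_num)) x)
  -- boundary vanishing of tangential derivatives of g
  have b0 : ∀ b : ℝ, g ![b, 0] = 0 := by
    intro b; show u ![b, 0] 1 = 0; rw [hnoslip b]; rfl
  have b1 : ∀ b : ℝ, pd 0 g ![b, 0] = 0 :=
    pd0_boundary_zero b0 (fun b => (hg2.differentiable (by norm_num)) _)
  have b2 : ∀ b : ℝ, pd 0 (pd 0 g) ![b, 0] = 0 :=
    pd0_boundary_zero b1 (fun b => (hpd0g2.differentiable (by norm_num)) _)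
  have b3 : ∀ b : ℝ, pd 0 (pd 0 (pd 0 g)) ![b, 0] = 0 :=
    pd0_boundary_zero b2 (fun b => (hpd00g1.differentiable (by norm_num)) _)
  -- the θ'' term
  have t1 : (fun b => deriv (fun c => vort2 u ![c, 0]) b)
      = fun b => pd 0 (vort2 u) ![b, 0] := by
    funext b
    exact deriv_comp_line _ b ((hω2.differentiable (by norm_num)) _)
  have t2 : deriv (fun b => deriv (fun c => vort2 u ![c, 0]) b) a
      = pd 0 (pd 0 (vort2 u)) ![a, 0] := by
    rw [t1]
    exact deriv_comp_line _ a ((hpd0ω1.differentiable (by norm_num)) _)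
  -- put it all together
  rw [t2, h00 ![a, 0], h11 ![a, 0], key ![a, 0], b3 a]
  ring
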